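/- There exist constants C, c > 0 (depending on d) such that for all L ≥ 1, the probability that the number of Poisson points whose Voronoi cell intersects the box Λ_L exceeds C L^d is at most e^{-c L^d}. -/

import Mathlib

open MeasureTheory

/-- `η` is a Poisson point process with intensity measure `μ` under `P`. -/
structure IsPoissonPP {Ω E : Type} [MeasurableSpace Ω] [MeasurableSpace E]
    (P : Measure Ω) (μ : Measure E) (η : Ω → Set E) : Prop where
  locallyFinite : ∀ᵐ ω ∂P, ∀ S : Set E, MeasurableSet S → μ S < ⊤ → (η ω ∩ S).Finite
  counts : ∀ S : Set E, MeasurableSet S → μ S < ⊤ → ∀ n : ℕ,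
    P {ω | (η ω ∩ S).Finite ∧ (η ω ∩ S).ncard = n} =
      ENNReal.ofReal (Real.exp (-(μ S).toReal) * (μ S).toReal ^ n / n.factorial)
  indep : ∀ S T : Set E, Disjoint S T → ∀ ES ET : Set Ω,
    (∀ ω ω', η ω ∩ S = η ω' ∩ S → (ω ∈ ES ↔ ω' ∈ ES)) →
    (∀ ω ω', η ω ∩ T = η ω' ∩ T → (ω ∈ ET ↔ ω' ∈ ET)) →
    P (ES ∩ ET) = P ES * P ET

/-- The Voronoi cell of `x` with respect to a point configuration `ξ`. -/
def VCell {d : ℕ} (x : EuclideanSpace ℝ (Fin d)) (ξ : Set (EuclideanSpace ℝ (Fin d))) :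
    Set (EuclideanSpace ℝ (Fin d)) :=
  {y | ∀ z ∈ ξ, dist y x ≤ dist y z}

/-- The box `Λ_L = [-L, L]^d`. -/
def box (d : ℕ) (L : ℝ) : Set (EuclideanSpace ℝ (Fin d)) := {y | ∀ i, |y i| ≤ L}

lemma box_eq_preimage (d : ℕ) (L : ℝ) :
    box d L = ((MeasurableEquiv.toLp 2 (Fin d → ℝ)).symm) ⁻¹'
      (Set.univ.pi fun _ : Fin d => Set.Icc (-L) L) := by
  ext y
  simp [box, Set.mem_pi, abs_le, MeasurableEquiv.coe_toLp_symm,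
    Pi.le_def, forall_and]

lemma box_measurable (d : ℕ) (L : ℝ) : MeasurableSet (box d L) := by
  rw [box_eq_preimage]
  exact ((MeasurableEquiv.toLp 2 (Fin d → ℝ)).symm).measurable
    (MeasurableSet.univ_pi fun _ => measurableSet_Icc)

lemma volume_box (d : ℕ) (L : ℝ) :
    volume (box d L) = ENNReal.ofReal (2 * L) ^ d := by
  rw [box_eq_preimage,
    (EuclideanSpace.volume_preserving_symm_measurableEquiv_toLp (Fin d)).measure_preimage
      (MeasurableSet.univ_pi fun _ => measurableSet_Icc).nullMeasurableSet,
    volume_pi_pi]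
  simp only [Real.volume_Icc, sub_neg_eq_add]
  rw [Finset.prod_const, Finset.card_univ, Fintype.card_fin]
  ring_nf

lemma volume_box_toReal (d : ℕ) {L : ℝ} (hL : 0 ≤ L) :
    (volume (box d L)).toReal = (2 * L) ^ d := by
  rw [volume_box, ENNReal.toReal_pow, ENNReal.toReal_ofReal (by linarith)]

lemma volume_box_lt_top (d : ℕ) (L : ℝ) : volume (box d L) < ⊤ := by
  rw [volume_box]
  exact ENNReal.pow_lt_top ENNReal.ofReal_lt_top

lemma coord_le_dist {d : ℕ} (x y : EuclideanSpace ℝ (Fin d)) (i : Fin d) :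
    |x i - y i| ≤ dist x y := by
  rw [EuclideanSpace.dist_eq]
  have h1 : dist (x i) (y i) ^ 2 ≤ ∑ j, dist (x j) (y j) ^ 2 :=
    Finset.single_le_sum (f := fun j => dist (x j) (y j) ^ 2)
      (fun j _ => sq_nonneg _) (Finset.mem_univ i)
  have := Real.sqrt_le_sqrt h1
  rwa [Real.sqrt_sq_eq_abs, abs_of_nonneg dist_nonneg, Real.dist_eq] at this

lemma cell_subset {d : ℕ} (hd : 1 ≤ d) {η : Set (EuclideanSpace ℝ (Fin d))} {L : ℝ}
    (hL : 0 ≤ L) {z : EuclideanSpace ℝ (Fin d)} (hz : z ∈ η) (hzb : z ∈ box d L)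
    {x : EuclideanSpace ℝ (Fin d)} (hcell : (VCell x η ∩ box d L).Nonempty) :
    x ∈ box d ((1 + 2 * d) * L) := by
  obtain ⟨y, hyc, hyb⟩ := hcell
  have hd1 : (1 : ℝ) ≤ d := by exact_mod_cast hd
  have h2 : dist y z ≤ 2 * d * L := by
    rw [EuclideanSpace.dist_eq]
    have hsum : ∑ j, dist (y j) (z j) ^ 2 ≤ (2 * d * L) ^ 2 := by
      have hco : ∀ j, dist (y j) (z j) ^ 2 ≤ (2 * L) ^ 2 := by
        intro j
        have h1 : |y j| ≤ L := hyb j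
        have h2' : |z j| ≤ L := hzb j
        have : dist (y j) (z j) ≤ 2 * L := by
          rw [Real.dist_eq]
          calc |y j - z j| ≤ |y j| + |z j| := abs_sub _ _
            _ ≤ 2 * L := by linarith
        nlinarith [dist_nonneg (x := y j) (y := z j)]
      calc ∑ j, dist (y j) (z j) ^ 2 ≤ ∑ _j : Fin d, (2 * L) ^ 2 :=
            Finset.sum_le_sum fun j _ => hco j
        _ = d * (2 * L) ^ 2 := by rw [Finset.sum_const, Finset.card_univ, Fintype.card_fin]; ring
        _ ≤ (2 * d * L) ^ 2 := by nlinarith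
    calc Real.sqrt (∑ j, dist (y j) (z j) ^ 2) ≤ Real.sqrt ((2 * d * L) ^ 2) :=
          Real.sqrt_le_sqrt hsum
      _ = 2 * d * L := Real.sqrt_sq (by positivity)
  have h1 : dist y x ≤ dist y z := hyc z hz
  intro i
  have h3 : |x i - y i| ≤ dist x y := coord_le_dist x y i
  rw [dist_comm] at h3
  have h4 : |x i| ≤ |y i| + |x i - y i| := by
    calc |x i| = |y i + (x i - y i)| := by ring_nf
      _ ≤ |y i| + |x i - y i| := abs_add_le _ _
  have h5 : |y i| ≤ L := hyb i
  calc |x i| ≤ L + 2 * d * L := by linarith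
    _ = (1 + 2 * d) * L := by ring

lemma poisson_term_le {m : ℝ} (hm : 0 ≤ m) {n : ℕ} (hn : Real.exp 2 * m ≤ n) :
    Real.exp (-m) * m ^ n / n.factorial ≤ Real.exp (-(n : ℝ)) := by
  have hfact : (n : ℝ) ^ n / n.factorial ≤ Real.exp n :=
    Real.pow_div_factorial_le_exp (x := (n : ℝ)) (Nat.cast_nonneg n) n
  have hfpos : (0 : ℝ) < n.factorial := by exact_mod_cast Nat.factorial_pos n
  have he2 : (0 : ℝ) < Real.exp 2 := Real.exp_pos 2
  have hmn : m ≤ (n : ℝ) / Real.exp 2 := by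
    rw [le_div_iff₀ he2]; linarith [hn]
  have hpow : m ^ n ≤ ((n : ℝ) / Real.exp 2) ^ n :=
    pow_le_pow_left₀ hm hmn n
  have hexpm : Real.exp (-m) ≤ 1 := Real.exp_le_one_iff.mpr (by linarith)
  have key : m ^ n / n.factorial ≤ Real.exp (-(n : ℝ)) := by
    have h2n : Real.exp 2 ^ n = Real.exp (2 * n) := by
      rw [mul_comm, Real.exp_nat_mul]
    have hnn : (n : ℝ) ^ n ≤ Real.exp n * n.factorial := by
      rw [div_le_iff₀ hfpos] at hfact; exact hfact
    calc m ^ n / n.factorial ≤ ((n : ℝ) / Real.exp 2) ^ n / n.factorial := by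
          gcongr
      _ = (n : ℝ) ^ n / (Real.exp 2 ^ n * n.factorial) := by rw [div_pow, div_div]
      _ ≤ (Real.exp n * n.factorial) / (Real.exp 2 ^ n * n.factorial) := by
          gcongr
      _ = Real.exp n / Real.exp (2 * n) := by
          rw [h2n, mul_div_mul_right _ _ (ne_of_gt hfpos)]
      _ = Real.exp (-(n : ℝ)) := by rw [← Real.exp_sub]; ring_nf
  calc Real.exp (-m) * m ^ n / n.factorial ≤ 1 * m ^ n / n.factorial := by
        apply div_le_div_of_nonneg_right _ hfpos.le
        exact mul_le_mul_of_nonneg_right hexpm (pow_nonneg hm n)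
    _ = m ^ n / n.factorial := by ring
    _ ≤ Real.exp (-(n : ℝ)) := key

/-- There exist `C, c > 0` such that for all `L ≥ 1`, the probability that the number of
Poisson points whose Voronoi cell meets `Λ_L` exceeds `C L^d` is at most `e^{-c L^d}`. -/
theorem many_cells_bound (d : ℕ) (hd : 1 ≤ d) :
    ∃ C : ℝ, 0 < C ∧ ∃ c : ℝ, 0 < c ∧
      ∀ (Ω : Type) (_ : MeasurableSpace Ω) (P : Measure Ω), IsProbabilityMeasure P →
      ∀ η : Ω → Set (EuclideanSpace ℝ (Fin d)), IsPoissonPP P volume η →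
      ∀ L : ℝ, 1 ≤ L →
        P {ω | {x | x ∈ η ω ∧ (VCell x (η ω) ∩ box d L).Nonempty}.Infinite ∨
            C * L ^ d < ({x | x ∈ η ω ∧ (VCell x (η ω) ∩ box d L).Nonempty}.ncard : ℝ)} ≤
          ENNReal.ofReal (Real.exp (-c * L ^ d)) := by
  set C : ℝ := Real.exp 2 * (2 * (1 + 2 * (d : ℝ))) ^ d + 3 with hCdef
  have hCpos : 0 < C := by positivity
  have hC3 : (3 : ℝ) ≤ C := by
    have : 0 ≤ Real.exp 2 * (2 * (1 + 2 * (d : ℝ))) ^ d := by positivity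
    linarith
  refine ⟨C, hCpos, 1, one_pos, ?_⟩
  intro Ω mΩ P hP η hη L hL
  have hL0 : (0 : ℝ) ≤ L := by linarith
  have ht1 : (1 : ℝ) ≤ L ^ d := one_le_pow₀ hL
  have ht0 : (0 : ℝ) ≤ L ^ d := by linarith
  set S : Set (EuclideanSpace ℝ (Fin d)) := box d ((1 + 2 * (d : ℝ)) * L) with hSdef
  have hSm : MeasurableSet S := box_measurable d _
  have hSfin : volume S < ⊤ := volume_box_lt_top d _
  have hRL0 : (0 : ℝ) ≤ (1 + 2 * (d : ℝ)) * L := by positivity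
  have hmS : (volume S).toReal = (2 * (1 + 2 * (d : ℝ))) ^ d * L ^ d := by
    rw [hSdef, volume_box_toReal d hRL0, ← mul_pow, ← mul_assoc]
  have hCL0 : (0 : ℝ) ≤ C * L ^ d := by positivity
  set N : ℕ := ⌊C * L ^ d⌋₊ + 1 with hNdef
  have hCLN : C * L ^ d ≤ (N : ℝ) := by
    have := Nat.lt_floor_add_one (C * L ^ d)
    push_cast [hNdef]
    linarith
  set B : Set Ω := {ω | (η ω ∩ box d L).Finite ∧ (η ω ∩ box d L).ncard = 0} with hBdef
  set I : Set Ω := {ω | (η ω ∩ S).Infinite} with hIdef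
  set E : ℕ → Set Ω := fun n => {ω | (η ω ∩ S).Finite ∧ (η ω ∩ S).ncard = n} with hEdef
  have hsub : {ω | {x | x ∈ η ω ∧ (VCell x (η ω) ∩ box d L).Nonempty}.Infinite ∨
      C * L ^ d < ({x | x ∈ η ω ∧ (VCell x (η ω) ∩ box d L).Nonempty}.ncard : ℝ)} ⊆
      B ∪ (I ∪ ⋃ k, E (N + k)) := by
    intro ω hω
    by_cases hBc : η ω ∩ box d L = ∅
    · exact Or.inl ⟨by rw [hBc]; exact Set.finite_empty, by rw [hBc]; simp⟩
    · obtain ⟨z, hzη, hzb⟩ := Set.nonempty_iff_ne_empty.2 hBc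
      by_cases hIc : (η ω ∩ S).Infinite
      · exact Or.inr (Or.inl hIc)
      · have hfin : (η ω ∩ S).Finite := Set.not_infinite.1 hIc
        have hsubF : {x | x ∈ η ω ∧ (VCell x (η ω) ∩ box d L).Nonempty} ⊆ η ω ∩ S :=
          fun x hx => ⟨hx.1, cell_subset hd hL0 hzη hzb hx.2⟩
        have hFfin := hfin.subset hsubF
        rcases hω with h | h
        · exact (h hFfin).elim
        · have hlt : C * L ^ d < ((η ω ∩ S).ncard : ℝ) :=
            lt_of_lt_of_le h (Nat.cast_le.2 (Set.ncard_le_ncard hsubF hfin))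
          have hN : N ≤ (η ω ∩ S).ncard := by
            have := (Nat.floor_lt hCL0).2 hlt
            omega
          exact Or.inr (Or.inr (Set.mem_iUnion.2 ⟨(η ω ∩ S).ncard - N, hfin, by omega⟩))
  have hI0 : P I = 0 := by
    have hae := hη.locallyFinite
    rw [MeasureTheory.ae_iff] at hae
    refine measure_mono_null ?_ hae
    intro ω hω hcon
    exact hω (hcon S hSm hSfin)
  have hBbd : P B ≤ ENNReal.ofReal (Real.exp (-(2 * L ^ d))) := by
    rw [hBdef, hη.counts (box d L) (box_measurable d L) (volume_box_lt_top d L) 0]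
    simp only [pow_zero, Nat.factorial_zero, Nat.cast_one, mul_one, div_one]
    apply ENNReal.ofReal_le_ofReal
    apply Real.exp_le_exp.2
    rw [volume_box_toReal d hL0]
    have h2d : (2 : ℝ) ≤ 2 ^ d := le_self_pow₀ one_le_two (by omega)
    have : 2 * L ^ d ≤ (2 * L) ^ d := by
      rw [mul_pow]
      nlinarith
    linarith
  have hexp1 : Real.exp (-1) < 1 := Real.exp_lt_one_iff.2 (by norm_num)
  have hterm : ∀ k : ℕ, P (E (N + k)) ≤
      ENNReal.ofReal (Real.exp (-(N : ℝ)) * Real.exp (-1) ^ k) := by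
    intro k
    rw [hEdef]
    simp only []
    rw [hη.counts S hSm hSfin (N + k)]
    apply ENNReal.ofReal_le_ofReal
    have h1 : Real.exp 2 * (volume S).toReal ≤ ((N + k : ℕ) : ℝ) := by
      rw [hmS]
      have : Real.exp 2 * ((2 * (1 + 2 * (d : ℝ))) ^ d * L ^ d) ≤ C * L ^ d := by
        rw [hCdef]; nlinarith
      have hk : (N : ℝ) ≤ ((N + k : ℕ) : ℝ) := by push_cast; linarith [Nat.cast_nonneg (α := ℝ) k]
      linarith
    refine (poisson_term_le ENNReal.toReal_nonneg h1).trans ?_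
    rw [← Real.exp_nat_mul, ← Real.exp_add]
    apply le_of_eq
    congr 1
    push_cast
    ring
  have hinvnn : (0 : ℝ) ≤ (1 - Real.exp (-1))⁻¹ :=
    inv_nonneg.2 (by linarith)
  have hsum : ∑' k, P (E (N + k)) ≤
      ENNReal.ofReal (Real.exp (-(N : ℝ)) * (1 - Real.exp (-1))⁻¹) := by
    calc ∑' k, P (E (N + k))
        ≤ ∑' k, ENNReal.ofReal (Real.exp (-(N : ℝ)) * Real.exp (-1) ^ k) :=
          ENNReal.tsum_le_tsum hterm
      _ = ENNReal.ofReal (∑' k, Real.exp (-(N : ℝ)) * Real.exp (-1) ^ k) :=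
          (ENNReal.ofReal_tsum_of_nonneg (fun k => by positivity)
            ((summable_geometric_of_lt_one (Real.exp_pos _).le hexp1).mul_left _)).symm
      _ = _ := by
          rw [tsum_mul_left, tsum_geometric_of_lt_one (Real.exp_pos _).le hexp1]
  have hmain : P {ω | {x | x ∈ η ω ∧ (VCell x (η ω) ∩ box d L).Nonempty}.Infinite ∨
      C * L ^ d < ({x | x ∈ η ω ∧ (VCell x (η ω) ∩ box d L).Nonempty}.ncard : ℝ)} ≤
      ENNReal.ofReal (Real.exp (-(2 * L ^ d))) +
        ENNReal.ofReal (Real.exp (-(N : ℝ)) * (1 - Real.exp (-1))⁻¹) := by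
    calc P _ ≤ P (B ∪ (I ∪ ⋃ k, E (N + k))) := measure_mono hsub
      _ ≤ P B + P (I ∪ ⋃ k, E (N + k)) := measure_union_le _ _
      _ ≤ P B + (P I + P (⋃ k, E (N + k))) := by
          gcongr
          exact measure_union_le _ _
      _ = P B + P (⋃ k, E (N + k)) := by rw [hI0, zero_add]
      _ ≤ P B + ∑' k, P (E (N + k)) := by
          gcongr
          exact measure_iUnion_le _
      _ ≤ _ := add_le_add hBbd hsum
  refine hmain.trans ?_
  rw [← ENNReal.ofReal_add (Real.exp_nonneg _) (mul_nonneg (Real.exp_nonneg _) hinvnn)]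
  apply ENNReal.ofReal_le_ofReal
  -- final real inequality
  have h2e : (2 : ℝ) ≤ Real.exp 1 := by linarith [Real.add_one_le_exp 1]
  have hehalf : Real.exp (-1) ≤ 1 / 2 := by
    rw [Real.exp_neg]
    rw [inv_le_comm₀ (Real.exp_pos 1) (by norm_num)]
    linarith
  have hinv2 : (1 - Real.exp (-1))⁻¹ ≤ 2 := by
    rw [inv_le_comm₀ (by linarith) (by norm_num)]
    linarith
  have hN3 : 3 * L ^ d ≤ (N : ℝ) := by
    have : 3 * L ^ d ≤ C * L ^ d := by nlinarith
    linarith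
  have hexpN : Real.exp (-(N : ℝ)) ≤ Real.exp (-(3 * L ^ d)) := by
    apply Real.exp_le_exp.2; linarith
  set u : ℝ := Real.exp (-(L ^ d)) with hu
  have hu0 : 0 < u := Real.exp_pos _
  have huhalf : u ≤ 1 / 2 := by
    refine le_trans ?_ hehalf
    apply Real.exp_le_exp.2; linarith
  have h2t : Real.exp (-(2 * L ^ d)) = u ^ 2 := by
    rw [hu, ← Real.exp_nat_mul]; congr 1; push_cast; ring
  have h3t : Real.exp (-(3 * L ^ d)) = u ^ 3 := by
    rw [hu, ← Real.exp_nat_mul]; congr 1; push_cast; ring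
  have hrhs : Real.exp (-1 * L ^ d) = u := by
    rw [hu]; congr 1; ring
  rw [h2t, hrhs]
  have hterm2 : Real.exp (-(N : ℝ)) * (1 - Real.exp (-1))⁻¹ ≤ u ^ 3 * 2 := by
    have h1 : Real.exp (-(N : ℝ)) ≤ u ^ 3 := by rw [← h3t]; exact hexpN
    exact mul_le_mul h1 hinv2 hinvnn (by positivity)
  nlinarith [sq_nonneg u, pow_nonneg hu0.le 3]
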